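/- For every directed set P there exists a locally convex Hausdorff topological vector space L over the real numbers (a real vector space with a topology making addition and scalar multiplication continuous, in which 0 has a neighborhood base of convex sets) such that P × ℕ (with the product order, ℕ carrying its usual order) is Tukey equivalent to N_0, the set of all neighborhoods of 0 in L ordered by reverse inclusion. -/

import Mathlib

open Set Topology Cardinal

universe u

/-- A map `ψ : Q → P` is a Tukey map if the image of every unbounded set is unbounded. -/
def IsTukeyMap {Q P : Type*} [Preorder Q] [Preorder P] (ψ : Q → P) : Prop :=
  ∀ S : Set Q, ¬ BddAbove S → ¬ BddAbove (ψ '' S)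

/-- `TukeyGE P Q` means `P ≥_T Q`: there is a Tukey map from `Q` to `P`. -/
def TukeyGE (P Q : Type*) [Preorder P] [Preorder Q] : Prop :=
  ∃ ψ : Q → P, IsTukeyMap ψ

/-- Tukey equivalence of directed sets. -/
def TukeyEquiv (P Q : Type*) [Preorder P] [Preorder Q] : Prop :=
  TukeyGE P Q ∧ TukeyGE Q P

/-- The poset of all neighborhoods of a point, ordered by reverse inclusion. -/
abbrev NbhdPoset {X : Type*} [TopologicalSpace X] (x : X) :=
  ({U : Set X // U ∈ nhds x})ᵒᵈ

section Aux

variable {P : Type u} [Preorder P]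

open Finsupp in
/-- The seminorm family on finitely supported functions `P →₀ ℝ`:
`qf p f = ∑_{x ≤ p} |f x|`. -/
noncomputable def qf [DecidableEq P] [DecidableRel ((· ≤ ·) : P → P → Prop)] :
    SeminormFamily ℝ (P →₀ ℝ) P := fun p =>
  { toFun := fun f => ∑ x ∈ f.support, if x ≤ p then |f x| else 0
    map_zero' := by simp
    add_le' := by
      intro f g
      show (∑ x ∈ (f + g).support, if x ≤ p then |(f + g) x| else 0)
        ≤ (∑ x ∈ f.support, if x ≤ p then |f x| else 0)
          + ∑ x ∈ g.support, if x ≤ p then |g x| else 0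
      have key : ∀ h : P →₀ ℝ, h.support ⊆ f.support ∪ g.support →
          ∑ x ∈ h.support, (if x ≤ p then |h x| else 0)
            = ∑ x ∈ f.support ∪ g.support, (if x ≤ p then |h x| else 0) := by
        intro h hs
        refine Finset.sum_subset hs fun x _ hx => ?_
        simp [Finsupp.notMem_support_iff.mp hx]
      rw [key (f + g) Finsupp.support_add, key f Finset.subset_union_left,
        key g Finset.subset_union_right, ← Finset.sum_add_distrib]
      refine Finset.sum_le_sum fun x _ => ?_
      by_cases hx : x ≤ p
      · simp only [hx, if_true, Finsupp.add_apply]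
        exact abs_add_le _ _
      · simp [hx]
    neg' := by
      intro f
      show (∑ x ∈ (-f).support, if x ≤ p then |(-f) x| else 0)
        = ∑ x ∈ f.support, if x ≤ p then |f x| else 0
      rw [Finsupp.support_neg]
      refine Finset.sum_congr rfl fun x _ => ?_
      simp
    smul' := by
      intro a f
      show (∑ x ∈ (a • f).support, if x ≤ p then |(a • f) x| else 0)
        = ‖a‖ * ∑ x ∈ f.support, if x ≤ p then |f x| else 0
      have key : ∑ x ∈ (a • f).support, (if x ≤ p then |(a • f) x| else 0)
          = ∑ x ∈ f.support, (if x ≤ p then |(a • f) x| else 0) := by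
        refine Finset.sum_subset Finsupp.support_smul fun x _ hx => ?_
        simp [Finsupp.notMem_support_iff.mp hx]
      rw [key, Finset.mul_sum]
      refine Finset.sum_congr rfl fun x _ => ?_
      by_cases hx : x ≤ p
      · simp [hx, abs_mul, Real.norm_eq_abs]
      · simp [hx]
    }

variable [DecidableEq P] [DecidableRel ((· ≤ ·) : P → P → Prop)]

lemma qf_apply (p : P) (f : P →₀ ℝ) :
    qf p f = ∑ x ∈ f.support, if x ≤ p then |f x| else 0 := rfl

lemma qf_mono {p p' : P} (h : p ≤ p') : (qf p : Seminorm ℝ (P →₀ ℝ)) ≤ qf p' := by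
  intro f
  show qf p f ≤ qf p' f
  rw [qf_apply, qf_apply]
  refine Finset.sum_le_sum fun x _ => ?_
  by_cases hx : x ≤ p
  · simp [hx, hx.trans h]
  · by_cases hx' : x ≤ p' <;> simp [hx, hx', abs_nonneg]

lemma qf_single (p a : P) (c : ℝ) :
    qf p (Finsupp.single a c) = if a ≤ p then |c| else 0 := by
  rw [qf_apply]
  rw [Finset.sum_subset Finsupp.support_single_subset (fun x hx hxs => by
    simp [Finsupp.notMem_support_iff.mp hxs])]
  simp [Finsupp.single_eq_same]

lemma qf_separating (f : P →₀ ℝ) (hf : f ≠ 0) : ∃ p : P, qf p f ≠ 0 := by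
  obtain ⟨p, hp⟩ := Finsupp.support_nonempty_iff.mpr hf
  refine ⟨p, ?_⟩
  have h1 : |f p| ≤ qf p f := by
    rw [qf_apply]
    have := Finset.single_le_sum (f := fun x => if x ≤ p then |f x| else 0)
      (fun x _ => by by_cases hx : x ≤ p <;> simp [hx, abs_nonneg]) hp
    simpa using this
  have h2 : 0 < |f p| := abs_pos.mpr (Finsupp.mem_support_iff.mp hp)
  exact ne_of_gt (lt_of_lt_of_le h2 h1)

end Aux

set_option maxHeartbeats 1000000 in
/-- For every directed set `P`, `P × ℕ` is Tukey equivalent to the neighborhood filter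
of `0` in some locally convex Hausdorff real topological vector space. -/
theorem stmt3 {P : Type u} [Preorder P]
    (hP : ∀ S : Set P, S.Finite → BddAbove S) :
    ∃ (L : Type u) (t : TopologicalSpace L) (a : AddCommGroup L),
      letI := t
      letI := a
      ∃ m : Module ℝ L,
        letI := m
        IsTopologicalAddGroup L ∧ ContinuousSMul ℝ L ∧ LocallyConvexSpace ℝ L ∧
          T2Space L ∧ TukeyEquiv (P × ℕ) (NbhdPoset (0 : L)) := by
  classical
  -- `P` is nonempty since the empty set is bounded above
  have hne : Nonempty P := by
    obtain ⟨b, -⟩ := hP ∅ finite_empty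
    exact ⟨b⟩
  set q : SeminormFamily ℝ (P →₀ ℝ) P := qf with hq
  letI t : TopologicalSpace (P →₀ ℝ) := q.moduleFilterBasis.topology
  have hws : WithSeminorms q := ⟨rfl⟩
  have htag : IsTopologicalAddGroup (P →₀ ℝ) := hws.topologicalAddGroup
  have hcs : ContinuousSMul ℝ (P →₀ ℝ) := hws.continuousSMul
  have hlc : LocallyConvexSpace ℝ (P →₀ ℝ) := hws.toLocallyConvexSpace
  have ht1 : T1Space (P →₀ ℝ) := hws.T1_of_separating fun x hx => qf_separating x hx
  have ht2 : T2Space (P →₀ ℝ) :=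
    IsTopologicalAddGroup.t2Space_iff_zero_closed.mpr isClosed_singleton
  -- the basic balls
  set U : P → ℕ → Set (P →₀ ℝ) := fun p n => (q p).ball 0 ((n + 1 : ℝ)⁻¹) with hU
  have hUpos : ∀ n : ℕ, (0 : ℝ) < (n + 1 : ℝ)⁻¹ := fun n => by positivity
  have hUmem : ∀ p n, U p n ∈ 𝓝 (0 : P →₀ ℝ) := by
    intro p n
    refine (hws.mem_nhds_iff 0 _).mpr ⟨{p}, (n + 1 : ℝ)⁻¹, hUpos n, ?_⟩
    rw [Finset.sup_singleton]
  -- every neighborhood of 0 contains a basic ball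
  have hWball : ∀ W : Set (P →₀ ℝ), W ∈ 𝓝 (0 : P →₀ ℝ) → ∃ p n, U p n ⊆ W := by
    intro W hW
    obtain ⟨s, r, hr, hsub⟩ := (hws.mem_nhds_iff 0 W).mp hW
    obtain ⟨b, hb⟩ := hP ↑s s.finite_toSet
    obtain ⟨n, hn⟩ := exists_nat_one_div_lt hr
    refine ⟨b, n, ?_⟩
    have h1 : s.sup q ≤ q b := by
      refine Finset.sup_le fun x hx => qf_mono (hb (Finset.mem_coe.mpr hx))
    have h2 : (q b).ball 0 ((n + 1 : ℝ)⁻¹) ⊆ (s.sup q).ball 0 r := by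
      intro f hf
      rw [Seminorm.mem_ball_zero] at hf ⊢
      calc s.sup q f ≤ q b f := h1 f
        _ < (n + 1 : ℝ)⁻¹ := hf
        _ ≤ r := by rw [one_div] at hn; exact le_of_lt (by exact_mod_cast hn)
    exact h2.trans hsub
  -- monotone inclusion of balls
  have hincl : ∀ {p p' : P} {n n' : ℕ}, p ≤ p' → n ≤ n' → U p' n' ⊆ U p n := by
    intro p p' n n' hp hn f hf
    rw [hU, Seminorm.mem_ball_zero] at hf ⊢
    calc q p f ≤ q p' f := qf_mono hp f
      _ < (n' + 1 : ℝ)⁻¹ := hf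
      _ ≤ (n + 1 : ℝ)⁻¹ := by
        apply inv_anti₀ (by positivity)
        exact_mod_cast Nat.succ_le_succ hn
  -- inclusion of balls forces order relation
  have hrev : ∀ {p p' : P} {n n' : ℕ}, U p' n' ⊆ U p n → p ≤ p' ∧ n ≤ n' := by
    intro p p' n n' h
    have hpp : p ≤ p' := by
      by_contra hc
      have hmem : Finsupp.single p ((n + 1 : ℝ)⁻¹) ∈ U p' n' := by
        rw [hU, Seminorm.mem_ball_zero, hq, qf_single]
        simp [hc, hUpos n']
      have := h hmem
      rw [hU, Seminorm.mem_ball_zero, hq, qf_single] at this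
      simp only [le_refl, if_true] at this
      rw [abs_of_pos (hUpos n)] at this
      exact lt_irrefl _ this
    refine ⟨hpp, ?_⟩
    by_contra hc
    push_neg at hc
    have hlt : (n + 1 : ℝ)⁻¹ < (n' + 1 : ℝ)⁻¹ := by
      apply inv_strictAnti₀ (by positivity)
      exact_mod_cast Nat.succ_lt_succ hc
    have hmem : Finsupp.single p ((n + 1 : ℝ)⁻¹) ∈ U p' n' := by
      rw [hU, Seminorm.mem_ball_zero, hq, qf_single]
      simp only [hpp, if_true]
      rw [abs_of_pos (hUpos n)]
      exact hlt
    have := h hmem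
    rw [hU, Seminorm.mem_ball_zero, hq, qf_single] at this
    simp only [le_refl, if_true] at this
    rw [abs_of_pos (hUpos n)] at this
    exact lt_irrefl _ this
  refine ⟨P →₀ ℝ, t, inferInstance, inferInstance, htag, hcs, hlc, ht2, ?_, ?_⟩
  · -- TukeyGE (P × ℕ) (NbhdPoset 0) : a Tukey map from NbhdPoset 0 to P × ℕ
    choose φp φn hφ using fun (W : {V : Set (P →₀ ℝ) // V ∈ 𝓝 (0 : P →₀ ℝ)}) =>
      hWball W.1 W.2
    refine ⟨fun W => (φp (OrderDual.ofDual W), φn (OrderDual.ofDual W)), ?_⟩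
    intro S hS hbdd
    apply hS
    obtain ⟨⟨b, m⟩, hb⟩ := hbdd
    refine ⟨OrderDual.toDual ⟨U b m, hUmem b m⟩, ?_⟩
    intro W hW
    have hmem : (φp (OrderDual.ofDual W), φn (OrderDual.ofDual W)) ∈
        (fun W => (φp (OrderDual.ofDual W), φn (OrderDual.ofDual W))) '' S :=
      mem_image_of_mem _ hW
    have hle := hb hmem
    have h1 : φp (OrderDual.ofDual W) ≤ b := hle.1
    have h2 : φn (OrderDual.ofDual W) ≤ m := hle.2
    have : U b m ⊆ (OrderDual.ofDual W).1 :=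
      (hincl h1 h2).trans (hφ (OrderDual.ofDual W))
    exact this
  · -- TukeyGE (NbhdPoset 0) (P × ℕ) : a Tukey map from P × ℕ to NbhdPoset 0
    refine ⟨fun pn => OrderDual.toDual ⟨U pn.1 pn.2, hUmem pn.1 pn.2⟩, ?_⟩
    intro S hS hbdd
    apply hS
    obtain ⟨W, hW⟩ := hbdd
    obtain ⟨b, m, hbm⟩ := hWball (OrderDual.ofDual W).1 (OrderDual.ofDual W).2
    refine ⟨(b, m), ?_⟩
    rintro ⟨p, n⟩ hpn
    have hmem : OrderDual.toDual (⟨U p n, hUmem p n⟩ :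
        {V : Set (P →₀ ℝ) // V ∈ 𝓝 (0 : P →₀ ℝ)}) ∈
        (fun pn => OrderDual.toDual (⟨U pn.1 pn.2, hUmem pn.1 pn.2⟩ :
          {V : Set (P →₀ ℝ) // V ∈ 𝓝 (0 : P →₀ ℝ)})) '' S :=
      mem_image_of_mem _ hpn
    have hle := hW hmem
    have hsub : (OrderDual.ofDual W).1 ⊆ U p n := hle
    have := hrev (hbm.trans hsub)
    exact ⟨this.1, this.2⟩
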